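/- Let Ω ⊂ ℝⁿ be a bounded domain and let u ∈ C(Ω̄). Let η ∈ L¹(ℝⁿ) be a non-negative Borel function with compact support contained in B_R(0) and ∫_{ℝⁿ} η dμ = 1. Let g : ℝⁿ → [0,∞) be a measurable function such that 2 g(z) ≤ η(w) whenever |w − z| ≤ 1, and set κ := ∫_{ℝⁿ} g dμ (automatically κ ≤ 1/2). Let x, y ∈ Ω with d := |x − y| > 0, let r ≥ d, and assume x, y ∈ Ω_{(R+1)d}. Then |u_d(x) − u_d(y)| ≤ κ ω(2r) + (1 − 2κ) ω(r), where u_d = u * η_d is the kernel regularization at scale d and ω is the modulus of continuity of u on Ω. -/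
import Mathlib

open MeasureTheory Metric


lemma aux_integrable {n : ℕ} {Ω : Set (EuclideanSpace ℝ (Fin n))}
    (hΩo : IsOpen Ω)
    {u : EuclideanSpace ℝ (Fin n) → ℝ} (hu : ContinuousOn u (closure Ω))
    {M : ℝ} (hM0 : 0 ≤ M) (hM : ∀ a ∈ closure Ω, ‖u a‖ ≤ M)
    {ψ : EuclideanSpace ℝ (Fin n) → ℝ} (hψ : Integrable ψ) (hψnn : ∀ z, 0 ≤ ψ z)
    {ρ : ℝ} (hsupp : Function.support ψ ⊆ ball 0 ρ)
    {p : EuclideanSpace ℝ (Fin n)} (hp : ∀ z : EuclideanSpace ℝ (Fin n), ‖z‖ < ρ → p - z ∈ Ω) :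
    Integrable (fun z => ψ z * u (p - z)) := by
  have hBm : MeasurableSet (ball (0 : EuclideanSpace ℝ (Fin n)) ρ) := measurableSet_ball
  set v : EuclideanSpace ℝ (Fin n) → ℝ :=
    (ball (0 : EuclideanSpace ℝ (Fin n)) ρ).indicator (fun z => u (p - z)) with hv
  have hmem : ∀ z ∈ ball (0 : EuclideanSpace ℝ (Fin n)) ρ, p - z ∈ Ω := by
    intro z hz
    exact hp z (by simpa [mem_ball, dist_zero_right] using hz)
  have hcont : ContinuousOn (fun z => u (p - z)) (ball (0 : EuclideanSpace ℝ (Fin n)) ρ) := by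
    intro z hz
    have h1 : ContinuousAt u (p - z) :=
      (hu.mono subset_closure).continuousAt (hΩo.mem_nhds (hmem z hz))
    exact (h1.comp ((continuous_const.sub continuous_id).continuousAt)).continuousWithinAt
  have hvm : AEMeasurable v := (aemeasurable_indicator_iff hBm).2 (hcont.aemeasurable hBm)
  have heq : (fun z => ψ z * u (p - z)) = fun z => ψ z * v z := by
    funext z
    by_cases hz : z ∈ ball (0 : EuclideanSpace ℝ (Fin n)) ρ
    · rw [hv, Set.indicator_of_mem hz]
    · have hz0 : ψ z = 0 := by
        by_contra h; exact hz (hsupp h)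
      simp [hz0]
  rw [heq]
  refine Integrable.mono' (hψ.const_mul M)
    ((hψ.aemeasurable.mul hvm).aestronglyMeasurable) (ae_of_all _ fun z => ?_)
  have hvz : ‖v z‖ ≤ M := by
    rw [hv]
    by_cases hz : z ∈ ball (0 : EuclideanSpace ℝ (Fin n)) ρ
    · rw [Set.indicator_of_mem hz]; exact hM _ (subset_closure (hmem z hz))
    · rw [Set.indicator_of_notMem hz]; simpa using hM0
  calc ‖ψ z * v z‖ = ψ z * ‖v z‖ := by rw [norm_mul, Real.norm_of_nonneg (hψnn z)]
  _ ≤ ψ z * M := mul_le_mul_of_nonneg_left hvz (hψnn z)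
  _ = M * ψ z := mul_comm _ _

/-- The key regularization inequality: for `x, y ∈ Ω_{(R+1)d}` with
`d = |x - y| > 0` and `r ≥ d`, the kernel regularizations at scale `d` satisfy
`|u_d(x) - u_d(y)| ≤ κ ω(2r) + (1 - 2κ) ω(r)`, where `ω` is the modulus of continuity of `u`
on `Ω` and `κ = ∫ g` for a function `g` with `2 g(z) ≤ η(w)` whenever `|w - z| ≤ 1`. -/
theorem stmt_2
    (n : ℕ) (Ω : Set (EuclideanSpace ℝ (Fin n)))
    (hΩo : IsOpen Ω) (hΩb : Bornology.IsBounded Ω) (hΩc : IsConnected Ω)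
    (u : EuclideanSpace ℝ (Fin n) → ℝ) (hu : ContinuousOn u (closure Ω))
    (R : ℝ) (hR : 0 < R)
    (η : EuclideanSpace ℝ (Fin n) → ℝ)
    (hηm : Measurable η) (hηnn : ∀ x, 0 ≤ η x)
    (hηint : Integrable η)
    (hηsupp : Function.support η ⊆ ball 0 R)
    (hη1 : (∫ x, η x) = 1)
    (g : EuclideanSpace ℝ (Fin n) → ℝ)
    (hgm : Measurable g) (hgnn : ∀ z, 0 ≤ g z)
    (hgη : ∀ z w, ‖w - z‖ ≤ 1 → 2 * g z ≤ η w)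
    (κ : ℝ) (hκ : κ = ∫ z, g z)
    (ω : ℝ → ℝ)
    (hω : ∀ s : ℝ, ω s = sSup {t : ℝ | ∃ a ∈ Ω, ∃ b ∈ Ω, ‖a - b‖ ≤ s ∧ t = |u a - u b|})
    (x y : EuclideanSpace ℝ (Fin n)) (hx : x ∈ Ω) (hy : y ∈ Ω)
    (d r : ℝ) (hd : d = ‖x - y‖) (hd0 : 0 < d) (hdr : d ≤ r)
    (hxd : (R + 1) * d < infDist x (frontier Ω))
    (hyd : (R + 1) * d < infDist y (frontier Ω)) :
    |(∫ z, (d ^ n)⁻¹ * η (d⁻¹ • z) * u (x - z)) -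
        (∫ z, (d ^ n)⁻¹ * η (d⁻¹ • z) * u (y - z))| ≤
      κ * ω (2 * r) + (1 - 2 * κ) * ω r := by
  have hdn : (0:ℝ) < d ^ n := pow_pos hd0 n
  have hc0 : (0:ℝ) < (d ^ n)⁻¹ := inv_pos.2 hdn
  set e : EuclideanSpace ℝ (Fin n) := x - y with he
  have hee : ‖e‖ = d := hd.symm
  have hRd : 0 < (R + 1) * d := by positivity
  -- the bound M
  have hcls : IsCompact (closure Ω) := hΩb.isCompact_closure
  obtain ⟨M, hM⟩ := hcls.exists_bound_of_continuousOn hu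
  have hM0 : 0 ≤ M := le_trans (norm_nonneg _) (hM x (subset_closure hx))
  -- membership
  have hmemgen : ∀ p ∈ Ω, (R + 1) * d < infDist p (frontier Ω) →
      ∀ z : EuclideanSpace ℝ (Fin n), ‖z‖ < (R + 1) * d → p - z ∈ Ω := by
    intro p hp hpd z hz
    by_contra hcon
    have hne : Ω ≠ Set.univ := by
      intro huniv
      rw [huniv, frontier_univ] at hpd
      simp [Metric.infDist_empty] at hpd
      linarith
    obtain ⟨w, hwf, hwd⟩ := exists_mem_frontier_infDist_compl_eq_dist hp hne
    have h1 : infDist p (frontier Ω) ≤ dist p w := infDist_le_dist_of_mem hwf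
    have h2 : infDist p Ωᶜ ≤ dist p (p - z) := infDist_le_dist_of_mem hcon
    have h3 : dist p (p - z) = ‖z‖ := by
      rw [dist_eq_norm]
      simp
    rw [h3, hwd] at h2
    linarith
  have hmemx : ∀ z : EuclideanSpace ℝ (Fin n), ‖z‖ < (R + 1) * d → x - z ∈ Ω :=
    hmemgen x hx hxd
  have hmemy : ∀ z : EuclideanSpace ℝ (Fin n), ‖z‖ < (R + 1) * d → y - z ∈ Ω :=
    hmemgen y hy hyd
  have hmemy' : ∀ z : EuclideanSpace ℝ (Fin n), ‖z‖ < R * d → (y - e) - z ∈ Ω := by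
    intro z hz
    have : (y - e) - z = y - (z + e) := by abel
    rw [this]
    refine hmemy (z + e) ?_
    calc ‖z + e‖ ≤ ‖z‖ + ‖e‖ := norm_add_le _ _
    _ < R * d + d := by rw [hee]; linarith
    _ = (R + 1) * d := by ring
  -- ω facts
  have hbdd : ∀ s : ℝ, BddAbove {t : ℝ | ∃ a ∈ Ω, ∃ b ∈ Ω, ‖a - b‖ ≤ s ∧ t = |u a - u b|} := by
    intro s
    refine ⟨2 * M, ?_⟩
    rintro t ⟨a, ha, b, hb, -, rfl⟩
    calc |u a - u b| ≤ |u a| + |u b| := abs_sub _ _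
    _ ≤ M + M := add_le_add (hM a (subset_closure ha)) (hM b (subset_closure hb))
    _ = 2 * M := by ring
  have hω_le : ∀ (s : ℝ) (a b : EuclideanSpace ℝ (Fin n)), a ∈ Ω → b ∈ Ω → ‖a - b‖ ≤ s →
      |u a - u b| ≤ ω s := by
    intro s a b ha hb hab
    rw [hω s]
    exact le_csSup (hbdd s) ⟨a, ha, b, hb, hab, rfl⟩
  -- g facts
  have hgle : ∀ z, g z ≤ η z := by
    intro z
    have h := hgη z z (by simp)
    linarith [hgnn z]
  have hgint : Integrable g := by
    refine hηint.mono' hgm.aestronglyMeasurable (ae_of_all _ fun z => ?_)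
    rw [Real.norm_of_nonneg (hgnn z)]
    exact hgle z
  have hgsupp : Function.support g ⊆ ball 0 R := by
    intro z hz
    have h0 : 0 < g z := lt_of_le_of_ne (hgnn z) (Ne.symm hz)
    exact hηsupp (Function.mem_support.2 (ne_of_gt (lt_of_lt_of_le h0 (hgle z))))
  set ηd : EuclideanSpace ℝ (Fin n) → ℝ := fun z => (d ^ n)⁻¹ * η (d⁻¹ • z) with hηdd
  set gd : EuclideanSpace ℝ (Fin n) → ℝ := fun z => (d ^ n)⁻¹ * g (d⁻¹ • z) with hgdd
  -- scaling
  have hscale_int : ∀ f : EuclideanSpace ℝ (Fin n) → ℝ, Integrable f →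
      Integrable (fun z => (d ^ n)⁻¹ * f (d⁻¹ • z)) := by
    intro f hf
    exact (hf.comp_smul (inv_ne_zero hd0.ne')).const_mul _
  have hscale_I : ∀ f : EuclideanSpace ℝ (Fin n) → ℝ,
      (∫ z, (d ^ n)⁻¹ * f (d⁻¹ • z)) = ∫ z, f z := by
    intro f
    rw [integral_const_mul, Measure.integral_comp_inv_smul_of_nonneg volume f hd0.le,
      finrank_euclideanSpace_fin, smul_eq_mul, ← mul_assoc, inv_mul_cancel₀ hdn.ne', one_mul]
  have hηd_int : Integrable ηd := hscale_int η hηint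
  have hgd_int : Integrable gd := hscale_int g hgint
  have hgd_int' : Integrable (fun z => gd (z - e)) := hgd_int.comp_sub_right e
  have hηd_I : (∫ z, ηd z) = 1 := by
    simp only [hηdd]; exact (hscale_I η).trans hη1
  have hgd_I : (∫ z, gd z) = κ := by
    simp only [hgdd]; exact (hscale_I g).trans hκ.symm
  have hgd_I' : (∫ z, gd (z - e)) = κ := by
    rw [integral_sub_right_eq_self (fun z => gd z) e]; exact hgd_I
  have hηd_nn : ∀ z, 0 ≤ ηd z := fun z => mul_nonneg hc0.le (hηnn _)
  have hgd_nn : ∀ z, 0 ≤ gd z := fun z => mul_nonneg hc0.le (hgnn _)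
  have hnorm_smul : ∀ z : EuclideanSpace ℝ (Fin n), ‖d⁻¹ • z‖ = d⁻¹ * ‖z‖ := fun z => by
    rw [norm_smul, Real.norm_of_nonneg (inv_nonneg.2 hd0.le)]
  have hsmall : ∀ z : EuclideanSpace ℝ (Fin n), ‖d⁻¹ • z‖ < R → ‖z‖ < R * d := by
    intro z h2
    rw [hnorm_smul] at h2
    calc ‖z‖ = d * (d⁻¹ * ‖z‖) := by field_simp
    _ < d * R := mul_lt_mul_of_pos_left h2 hd0
    _ = R * d := mul_comm _ _
  have hηd_supp : ∀ z, ηd z ≠ 0 → ‖z‖ < R * d := by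
    intro z hz
    have hη0 : η (d⁻¹ • z) ≠ 0 := fun h => hz (by simp [hηdd, h])
    exact hsmall z (by simpa [mem_ball, dist_zero_right] using hηsupp hη0)
  have hgd_supp : ∀ z, gd z ≠ 0 → ‖z‖ < R * d := by
    intro z hz
    have hg0 : g (d⁻¹ • z) ≠ 0 := fun h => hz (by simp [hgdd, h])
    exact hsmall z (by simpa [mem_ball, dist_zero_right] using hgsupp hg0)
  have hkey : ∀ z, gd z + gd (z - e) ≤ ηd z := by
    intro z
    have h1 : 2 * g (d⁻¹ • z) ≤ η (d⁻¹ • z) := hgη _ _ (by simp)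
    have h2 : 2 * g (d⁻¹ • (z - e)) ≤ η (d⁻¹ • z) := by
      refine hgη _ _ ?_
      have h3 : d⁻¹ • z - d⁻¹ • (z - e) = d⁻¹ • e := by
        rw [← smul_sub]; congr 1; abel
      rw [h3, hnorm_smul, hee, inv_mul_cancel₀ hd0.ne']
    simp only [hηdd, hgdd]
    have h4 : g (d⁻¹ • z) + g (d⁻¹ • (z - e)) ≤ η (d⁻¹ • z) := by linarith
    calc (d^n)⁻¹ * g (d⁻¹ • z) + (d^n)⁻¹ * g (d⁻¹ • (z - e))
        = (d^n)⁻¹ * (g (d⁻¹ • z) + g (d⁻¹ • (z - e))) := by ring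
    _ ≤ (d^n)⁻¹ * η (d⁻¹ • z) := mul_le_mul_of_nonneg_left h4 hc0.le
  have hRd' : R * d ≤ (R + 1) * d := by nlinarith
  have hsupp_ηd : Function.support ηd ⊆ ball 0 ((R+1)*d) := by
    intro z hz
    have := hηd_supp z hz
    simp only [mem_ball, dist_zero_right]
    linarith
  have hsupp_gd : Function.support gd ⊆ ball 0 ((R+1)*d) := by
    intro z hz
    have := hgd_supp z hz
    simp only [mem_ball, dist_zero_right]
    linarith
  have hsupp_gd0 : Function.support gd ⊆ ball 0 (R*d) := by
    intro z hz
    have := hgd_supp z hz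
    simp only [mem_ball, dist_zero_right]
    linarith
  have hsupp_gd' : Function.support (fun z => gd (z - e)) ⊆ ball 0 ((R+1)*d) := by
    intro z hz
    have h1 : ‖z - e‖ < R * d := hgd_supp _ hz
    simp only [mem_ball, dist_zero_right]
    calc ‖z‖ = ‖z - e + e‖ := by rw [sub_add_cancel]
    _ ≤ ‖z - e‖ + ‖e‖ := norm_add_le _ _
    _ < R * d + d := by rw [hee]; linarith
    _ = (R + 1) * d := by ring
  have Iηx : Integrable (fun z => ηd z * u (x - z)) :=
    aux_integrable hΩo hu hM0 hM hηd_int hηd_nn hsupp_ηd hmemx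
  have Iηy : Integrable (fun z => ηd z * u (y - z)) :=
    aux_integrable hΩo hu hM0 hM hηd_int hηd_nn hsupp_ηd hmemy
  have Igx : Integrable (fun z => gd z * u (x - z)) :=
    aux_integrable hΩo hu hM0 hM hgd_int hgd_nn hsupp_gd hmemx
  have Igy : Integrable (fun z => gd z * u (y - z)) :=
    aux_integrable hΩo hu hM0 hM hgd_int hgd_nn hsupp_gd hmemy
  have Ig'x : Integrable (fun z => gd (z - e) * u (x - z)) :=
    aux_integrable hΩo hu hM0 hM hgd_int' (fun z => hgd_nn _) hsupp_gd' hmemx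
  have Ig'y : Integrable (fun z => gd (z - e) * u (y - z)) :=
    aux_integrable hΩo hu hM0 hM hgd_int' (fun z => hgd_nn _) hsupp_gd' hmemy
  have Igy' : Integrable (fun z => gd z * u ((y - e) - z)) :=
    aux_integrable hΩo hu hM0 hM hgd_int hgd_nn hsupp_gd0 hmemy'
  -- change of variables
  have cv1 : (∫ z, gd (z - e) * u (x - z)) = ∫ z, gd z * u (y - z) := by
    rw [← integral_add_right_eq_self (μ := volume) (fun z => gd (z - e) * u (x - z)) e]
    congr 1
    funext z
    rw [show z + e - e = z by abel, show x - (z + e) = y - z by rw [he]; abel]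
  have cv2 : (∫ z, gd (z - e) * u (y - z)) = ∫ z, gd z * u ((y - e) - z) := by
    rw [← integral_add_right_eq_self (μ := volume) (fun z => gd (z - e) * u (y - z)) e]
    congr 1
    funext z
    rw [show z + e - e = z by abel, show y - (z + e) = (y - e) - z by abel]
  -- the two pieces
  have hArw : (fun z => (ηd z - gd z - gd (z - e)) * (u (x - z) - u (y - z)))
      = fun z => (ηd z * u (x - z) - gd z * u (x - z) - gd (z - e) * u (x - z))
        - (ηd z * u (y - z) - gd z * u (y - z) - gd (z - e) * u (y - z)) :=
    funext fun z => by ring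
  have hBrw : (fun z => gd z * (u (x - z) - u ((y - e) - z)))
      = fun z => gd z * u (x - z) - gd z * u ((y - e) - z) :=
    funext fun z => by ring
  have IA1 : Integrable (fun z => ηd z * u (x - z) - gd z * u (x - z)) := Iηx.sub Igx
  have IA2 : Integrable
      (fun z => ηd z * u (x - z) - gd z * u (x - z) - gd (z - e) * u (x - z)) := IA1.sub Ig'x
  have IA3 : Integrable (fun z => ηd z * u (y - z) - gd z * u (y - z)) := Iηy.sub Igy
  have IA4 : Integrable
      (fun z => ηd z * u (y - z) - gd z * u (y - z) - gd (z - e) * u (y - z)) := IA3.sub Ig'y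
  have Ih1 : Integrable (fun z => ηd z - gd z) := hηd_int.sub hgd_int
  have Ih2 : Integrable (fun z => ηd z - gd z - gd (z - e)) := Ih1.sub hgd_int'
  have Ih2c : Integrable (fun z => (ηd z - gd z - gd (z - e)) * ω r) := Ih2.mul_const _
  have Igc : Integrable (fun z => gd z * ω (2 * r)) := hgd_int.mul_const _
  have hAint : Integrable (fun z => (ηd z - gd z - gd (z - e)) * (u (x - z) - u (y - z))) := by
    rw [hArw]
    exact IA2.sub IA4
  have hBint : Integrable (fun z => gd z * (u (x - z) - u ((y - e) - z))) := by
    rw [hBrw]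
    exact Igx.sub Igy'
  have hiden : (∫ z, ηd z * u (x - z)) - (∫ z, ηd z * u (y - z)) =
      (∫ z, (ηd z - gd z - gd (z - e)) * (u (x - z) - u (y - z))) +
      (∫ z, gd z * (u (x - z) - u ((y - e) - z))) := by
    have hA : (∫ z, (ηd z - gd z - gd (z - e)) * (u (x - z) - u (y - z)))
        = (∫ z, ηd z * u (x - z)) - (∫ z, gd z * u (x - z)) - (∫ z, gd (z - e) * u (x - z))
          - ((∫ z, ηd z * u (y - z)) - (∫ z, gd z * u (y - z)) - (∫ z, gd (z - e) * u (y - z))) := by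
      rw [hArw, integral_sub IA2 IA4, integral_sub IA1 Ig'x, integral_sub Iηx Igx,
        integral_sub IA3 Ig'y, integral_sub Iηy Igy]
    have hB : (∫ z, gd z * (u (x - z) - u ((y - e) - z)))
        = (∫ z, gd z * u (x - z)) - (∫ z, gd z * u ((y - e) - z)) := by
      rw [hBrw]
      exact integral_sub Igx Igy'
    rw [hA, hB, cv1, cv2]
    ring
  -- bound for A
  have hgd0 : ∀ z, ηd z = 0 → gd z = 0 ∧ gd (z - e) = 0 := by
    intro z h0
    have hk := hkey z
    rw [h0] at hk
    have h1 : gd z ≤ 0 := by linarith [hgd_nn (z - e)]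
    have h2 : gd (z - e) ≤ 0 := by linarith [hgd_nn z]
    exact ⟨le_antisymm h1 (hgd_nn z), le_antisymm h2 (hgd_nn (z - e))⟩
  have hboundA : ∀ z, |(ηd z - gd z - gd (z - e)) * (u (x - z) - u (y - z))|
      ≤ (ηd z - gd z - gd (z - e)) * ω r := by
    intro z
    by_cases h0 : ηd z = 0
    · obtain ⟨ha, hb⟩ := hgd0 z h0
      simp [h0, ha, hb]
    · have hz : ‖z‖ < R * d := hηd_supp z h0
      have hz' : ‖z‖ < (R + 1) * d := lt_of_lt_of_le hz hRd'
      have hdiff : ‖(x - z) - (y - z)‖ ≤ r := by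
        rw [show (x - z) - (y - z) = e by rw [he]; abel, hee]
        exact hdr
      have hub : |u (x - z) - u (y - z)| ≤ ω r := hω_le r _ _ (hmemx z hz') (hmemy z hz') hdiff
      have hnn : 0 ≤ ηd z - gd z - gd (z - e) := by linarith [hkey z, hgd_nn z, hgd_nn (z - e)]
      rw [abs_mul, abs_of_nonneg hnn]
      exact mul_le_mul_of_nonneg_left hub hnn
  have hAbound : |∫ z, (ηd z - gd z - gd (z - e)) * (u (x - z) - u (y - z))|
      ≤ (1 - 2 * κ) * ω r := by
    calc |∫ z, (ηd z - gd z - gd (z - e)) * (u (x - z) - u (y - z))|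
        ≤ ∫ z, |(ηd z - gd z - gd (z - e)) * (u (x - z) - u (y - z))| := by
          simpa only [Real.norm_eq_abs] using norm_integral_le_integral_norm (μ := volume)
            (fun z => (ηd z - gd z - gd (z - e)) * (u (x - z) - u (y - z)))
    _ ≤ ∫ z, (ηd z - gd z - gd (z - e)) * ω r :=
          integral_mono hAint.abs Ih2c hboundA
    _ = (1 - 2 * κ) * ω r := by
          rw [integral_mul_const, integral_sub Ih1 hgd_int', integral_sub hηd_int hgd_int,
            hηd_I, hgd_I, hgd_I']
          ring
  -- bound for B
  have hboundB : ∀ z, |gd z * (u (x - z) - u ((y - e) - z))| ≤ gd z * ω (2 * r) := by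
    intro z
    by_cases h0 : gd z = 0
    · simp [h0]
    · have hz : ‖z‖ < R * d := hgd_supp z h0
      have hdiff : ‖(x - z) - ((y - e) - z)‖ ≤ 2 * r := by
        rw [show (x - z) - ((y - e) - z) = e + e by rw [he]; abel]
        calc ‖e + e‖ ≤ ‖e‖ + ‖e‖ := norm_add_le _ _
        _ = 2 * d := by rw [hee]; ring
        _ ≤ 2 * r := by linarith
      have hub : |u (x - z) - u ((y - e) - z)| ≤ ω (2 * r) :=
        hω_le (2 * r) _ _ (hmemx z (lt_of_lt_of_le hz hRd')) (hmemy' z hz) hdiff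
      rw [abs_mul, abs_of_nonneg (hgd_nn z)]
      exact mul_le_mul_of_nonneg_left hub (hgd_nn z)
  have hBbound : |∫ z, gd z * (u (x - z) - u ((y - e) - z))| ≤ κ * ω (2 * r) := by
    calc |∫ z, gd z * (u (x - z) - u ((y - e) - z))|
        ≤ ∫ z, |gd z * (u (x - z) - u ((y - e) - z))| := by
          simpa only [Real.norm_eq_abs] using norm_integral_le_integral_norm (μ := volume)
            (fun z => gd z * (u (x - z) - u ((y - e) - z)))
    _ ≤ ∫ z, gd z * ω (2 * r) := integral_mono hBint.abs Igc hboundB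
    _ = κ * ω (2 * r) := by rw [integral_mul_const, hgd_I]
  -- conclusion
  show |(∫ z, ηd z * u (x - z)) - ∫ z, ηd z * u (y - z)| ≤ κ * ω (2 * r) + (1 - 2 * κ) * ω r
  rw [hiden]
  calc |(∫ z, (ηd z - gd z - gd (z - e)) * (u (x - z) - u (y - z))) +
      (∫ z, gd z * (u (x - z) - u ((y - e) - z)))|
      ≤ |∫ z, (ηd z - gd z - gd (z - e)) * (u (x - z) - u (y - z))| +
        |∫ z, gd z * (u (x - z) - u ((y - e) - z))| := abs_add_le _ _
  _ ≤ (1 - 2 * κ) * ω r + κ * ω (2 * r) := add_le_add hAbound hBbound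
  _ = κ * ω (2 * r) + (1 - 2 * κ) * ω r := by ring
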